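/- arXiv:1306.0437 — 4 statements merged into one kernel-verified Lean document; each statement's English description precedes it below -/
import Mathlib

section
/- Let m ≤ m′ and r′ ≤ r be natural numbers with r − r′ = m′ − m. Let Q(i,a) (for i ∈ {0,…,m′−1}, a ∈ {1,…,r}) and P(b,j) (for b ∈ {1,…,r}, j ∈ {m,…,m′−1}) be real matrices satisfying: (i) Q(i,a) = 0 whenever m ≤ i ≤ m′−1 and 1 ≤ a ≤ r′; (ii) Σ_{a=1}^{r} Q(i,a)·P(a,j) = δ_{ij} for all i, j ∈ {m,…,m′−1}. Let A(0),…,A(m−1) and η(1),…,η(r) be arbitrary real numbers. Define Λ(b) = η(b) + Σ_{i=0}^{m−1} Q(i,b)·A(i) for b ∈ {1,…,r′}, and c(j,i) = −Σ_{a=1}^{r} Q(i,a)·P(a,j) for j ∈ {m,…,m′−1} and i ∈ {0,…,m−1}. Then for every a ∈ {r′+1,…,r} one has η(a) = −Σ_{i=0}^{m−1} Q(i,a)·A(i) + Σ_{j=m}^{m′−1} Q(j,a)·( −Σ_{b=1}^{r′} P(b,j)·Λ(b) + Σ_{b=1}^{r} P(b,j)·η(b) − Σ_{i=0}^{m−1}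 c(j,i)·A(i) ). -/
open Finset

/-- Split a sum over `Icc 1 r` into `Icc 1 r'` plus `Icc (r'+1) r`. -/
private lemma sum_Icc_split {r' r : ℕ} (hr : r' ≤ r) (f : ℕ → ℝ) :
    ∑ b ∈ Icc 1 r, f b = (∑ b ∈ Icc 1 r', f b) + ∑ b ∈ Icc (r' + 1) r, f b := by
  have h0 : Icc 1 r = Ioc 0 r := Finset.Icc_add_one_left_eq_Ioc 0 r
  have h1 : Icc 1 r' = Ioc 0 r' := Finset.Icc_add_one_left_eq_Ioc 0 r'
  have h2 : Icc (r' + 1) r = Ioc r' r := Finset.Icc_add_one_left_eq_Ioc r' r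
  rw [h0, h1, h2, Finset.sum_Ioc_consecutive f (Nat.zero_le r') hr]

/-- From left-inverse (`hQP`) plus vanishing (`hQ0`) of the square blocks,
deduce the right-inverse identity. -/
private lemma key_inverse
    (m m' r r' : ℕ) (hm : m ≤ m') (hr : r' ≤ r) (hdim : r - r' = m' - m)
    (Q P : ℕ → ℕ → ℝ)
    (hQ0 : ∀ i a, m ≤ i → i < m' → 1 ≤ a → a ≤ r' → Q i a = 0)
    (hQP : ∀ i j, m ≤ i → i < m' → m ≤ j → j < m' →
      (∑ a ∈ Finset.Icc 1 r, Q i a * P a j) = if i = j then (1 : ℝ) else 0) :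
    ∀ a b, r' + 1 ≤ a → a ≤ r → r' + 1 ≤ b → b ≤ r →
      (∑ j ∈ Finset.Ico m m', P b j * Q j a) = if b = a then (1 : ℝ) else 0 := by
  set n := m' - m with hn
  have hrn : r = r' + n := by omega
  set M : Matrix (Fin n) (Fin n) ℝ := fun i a => Q (m + i) (r' + 1 + a) with hM
  set N : Matrix (Fin n) (Fin n) ℝ := fun a j => P (r' + 1 + a) (m + j) with hN
  have hMN : M * N = 1 := by
    ext i j
    rw [Matrix.mul_apply, Matrix.one_apply]
    have h1 := hQP (m + i) (m + j) (by omega) (by omega) (by omega) (by omega)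
    rw [sum_Icc_split hr] at h1
    have hz : ∑ a ∈ Icc 1 r', Q (m + i) a * P a (m + j) = 0 := by
      refine Finset.sum_eq_zero fun a ha => ?_
      rw [mem_Icc] at ha
      rw [hQ0 (m + i) a (by omega) (by omega) ha.1 ha.2, zero_mul]
    rw [hz, zero_add] at h1
    have hre : ∑ a ∈ Icc (r' + 1) r, Q (m + i) a * P a (m + j)
        = ∑ a : Fin n, M i a * N a j := by
      have : Icc (r' + 1) r = Ico (r' + 1) (r + 1) := by
        rw [Finset.Ico_add_one_right_eq_Icc]
      rw [this, Finset.sum_Ico_eq_sum_range]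
      have hcard : r + 1 - (r' + 1) = n := by omega
      rw [hcard, ← Fin.sum_univ_eq_sum_range (fun k => Q (m + i) (r' + 1 + k) * P (r' + 1 + k) (m + j)) n]
    rw [hre] at h1
    rw [h1]
    congr 1
    simp only [Fin.ext_iff]
    exact propext (by omega)
  have hNM : N * M = 1 := mul_eq_one_comm.mp hMN
  intro a b ha1 ha2 hb1 hb2
  have hb' : b - (r' + 1) < n := by omega
  have ha' : a - (r' + 1) < n := by omega
  have := congrFun (congrFun hNM ⟨b - (r' + 1), hb'⟩) ⟨a - (r' + 1), ha'⟩
  rw [Matrix.mul_apply, Matrix.one_apply] at this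
  have hb'' : r' + 1 + (b - (r' + 1)) = b := by omega
  have ha'' : r' + 1 + (a - (r' + 1)) = a := by omega
  have hre : ∑ j ∈ Ico m m', P b j * Q j a
      = ∑ j : Fin n, N ⟨b - (r' + 1), hb'⟩ j * M j ⟨a - (r' + 1), ha'⟩ := by
    rw [Finset.sum_Ico_eq_sum_range, ← hn,
      ← Fin.sum_univ_eq_sum_range (fun k => P b (m + k) * Q (m + k) a) n]
    simp only [hM, hN, hb'', ha'']
  rw [hre, this]
  congr 1
  simp only [Fin.ext_iff]
  exact propext (by omega)

/-- The linear-algebraic identity underlying the open mirror theorem: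
with `η a = log y_a`, `Λ b = η b + ∑_{i<m} Q i b * A i` the toric mirror map,
and `c j i = -∑_{a=1}^r Q i a * P a j`, the SYZ map is inverse to the toric
mirror map.  Here `Λ` and `c` are inlined in the conclusion. -/
theorem syz_inverse_to_mirror_map
    (m m' r r' : ℕ) (hm : m ≤ m') (hr : r' ≤ r) (hdim : r - r' = m' - m)
    (Q P : ℕ → ℕ → ℝ) (A η : ℕ → ℝ)
    (hQ0 : ∀ i a, m ≤ i → i < m' → 1 ≤ a → a ≤ r' → Q i a = 0)
    (hQP : ∀ i j, m ≤ i → i < m' → m ≤ j → j < m' →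
      (∑ a ∈ Finset.Icc 1 r, Q i a * P a j) = if i = j then (1 : ℝ) else 0) :
    ∀ a, r' + 1 ≤ a → a ≤ r →
      η a = -(∑ i ∈ Finset.range m, Q i a * A i)
        + ∑ j ∈ Finset.Ico m m', Q j a *
            (-(∑ b ∈ Finset.Icc 1 r',
                  P b j * (η b + ∑ i ∈ Finset.range m, Q i b * A i))
              + (∑ b ∈ Finset.Icc 1 r, P b j * η b)
              - ∑ i ∈ Finset.range m,
                  (-(∑ c ∈ Finset.Icc 1 r, Q i c * P c j)) * A i) := by
  intro a ha1 ha2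
  set S : ℕ → ℝ := fun b => ∑ i ∈ Finset.range m, Q i b * A i with hS
  -- Step 1: simplify the bracket
  have hB : ∀ j, (-(∑ b ∈ Finset.Icc 1 r', P b j * (η b + S b))
        + (∑ b ∈ Finset.Icc 1 r, P b j * η b)
        - ∑ i ∈ Finset.range m, (-(∑ c ∈ Finset.Icc 1 r, Q i c * P c j)) * A i)
      = ∑ b ∈ Finset.Icc (r' + 1) r, P b j * (η b + S b) := by
    intro j
    have h3 : ∑ i ∈ Finset.range m, (-(∑ c ∈ Finset.Icc 1 r, Q i c * P c j)) * A i
        = -(∑ c ∈ Finset.Icc 1 r, P c j * S c) := by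
      simp only [neg_mul, Finset.sum_neg_distrib]
      congr 1
      simp only [Finset.sum_mul]
      rw [Finset.sum_comm]
      refine Finset.sum_congr rfl fun c _ => ?_
      rw [hS, Finset.mul_sum]
      exact Finset.sum_congr rfl fun i _ => by ring
    rw [h3]
    have hsplit := sum_Icc_split hr (fun b => P b j * (η b + S b))
    have hcomb : ∑ b ∈ Finset.Icc 1 r, P b j * (η b + S b)
        = (∑ b ∈ Finset.Icc 1 r, P b j * η b) + ∑ b ∈ Finset.Icc 1 r, P b j * S b := by
      rw [← Finset.sum_add_distrib]
      exact Finset.sum_congr rfl fun b _ => by ring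
    rw [hcomb] at hsplit
    linarith
  rw [show ∀ x : ℝ, η a = x ↔ η a = x from fun x => Iff.rfl]
  calc η a = -(S a) + (η a + S a) := by ring
    _ = -(S a) + ∑ j ∈ Finset.Ico m m', Q j a *
          (-(∑ b ∈ Finset.Icc 1 r', P b j * (η b + S b))
            + (∑ b ∈ Finset.Icc 1 r, P b j * η b)
            - ∑ i ∈ Finset.range m, (-(∑ c ∈ Finset.Icc 1 r, Q i c * P c j)) * A i) := by
        congr 1
        have : ∑ j ∈ Finset.Ico m m', Q j a *
            (-(∑ b ∈ Finset.Icc 1 r', P b j * (η b + S b))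
              + (∑ b ∈ Finset.Icc 1 r, P b j * η b)
              - ∑ i ∈ Finset.range m, (-(∑ c ∈ Finset.Icc 1 r, Q i c * P c j)) * A i)
            = ∑ j ∈ Finset.Ico m m', Q j a *
                ∑ b ∈ Finset.Icc (r' + 1) r, P b j * (η b + S b) := by
          exact Finset.sum_congr rfl fun j _ => by rw [hB j]
        rw [this]
        have hswap : ∑ j ∈ Finset.Ico m m', Q j a *
              ∑ b ∈ Finset.Icc (r' + 1) r, P b j * (η b + S b)
            = ∑ b ∈ Finset.Icc (r' + 1) r,
                (∑ j ∈ Finset.Ico m m', P b j * Q j a) * (η b + S b) := by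
          simp only [Finset.mul_sum, Finset.sum_mul]
          rw [Finset.sum_comm]
          exact Finset.sum_congr rfl fun b _ => Finset.sum_congr rfl fun j _ => by ring
        rw [hswap]
        have hkey := key_inverse m m' r r' hm hr hdim Q P hQ0 hQP
        have : ∑ b ∈ Finset.Icc (r' + 1) r,
              (∑ j ∈ Finset.Ico m m', P b j * Q j a) * (η b + S b)
            = ∑ b ∈ Finset.Icc (r' + 1) r,
                (if b = a then (1 : ℝ) else 0) * (η b + S b) := by
          refine Finset.sum_congr rfl fun b hb => ?_
          rw [Finset.mem_Icc] at hb
          rw [hkey a b ha1 ha2 hb.1 hb.2]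
        rw [this]
        simp only [ite_mul, one_mul, zero_mul]
        rw [Finset.sum_ite_eq' (Finset.Icc (r' + 1) r) a (fun b => η b + S b)]
        rw [if_pos (Finset.mem_Icc.mpr ⟨ha1, ha2⟩)]
end

section
/- For every real number x with |x| < 1/4, the series Σ_{k=1}^{∞} ((2k−1)!/(k!)²) · x^k converges and its sum equals log 2 − log(1 + √(1−4x)); equivalently, the function k ↦ −((2k−1)!/(k!)²)·x^k (over k ≥ 1) has sum −log 2 + log(1 + √(1−4x)). -/
open Real Set

noncomputable def Scb (y : ℝ) : ℝ := ∑' k : ℕ, (Nat.centralBinom k : ℝ) * y ^ k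

lemma cb_le_four_pow (n : ℕ) : Nat.centralBinom n ≤ 4 ^ n := by
  induction n with
  | zero => simp [Nat.centralBinom]
  | succ n ih =>
    have h := Nat.succ_mul_centralBinom_succ n
    have h2 : (n + 1) * Nat.centralBinom (n + 1) ≤ (n + 1) * (4 * Nat.centralBinom n) := by
      rw [h]; ring_nf; nlinarith [Nat.centralBinom_pos n]
    have := Nat.le_of_mul_le_mul_left h2 (Nat.succ_pos n)
    calc Nat.centralBinom (n + 1) ≤ 4 * Nat.centralBinom n := this
    _ ≤ 4 * 4 ^ n := by omega
    _ = 4 ^ (n + 1) := by ring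

lemma cb_le_four_pow' (n : ℕ) : (Nat.centralBinom n : ℝ) ≤ 4 ^ n := by
  exact_mod_cast cb_le_four_pow n

lemma aux_summable (q : ℝ) (h0 : 0 ≤ q) (h1 : q < 1) :
    Summable fun k : ℕ => ((k : ℝ) + 1) * q ^ k := by
  have hq : ‖q‖ < 1 := by rwa [Real.norm_eq_abs, abs_of_nonneg h0]
  have h2 := summable_pow_mul_geometric_of_norm_lt_one (R := ℝ) 1 hq
  have h3 := summable_geometric_of_norm_lt_one hq
  have : (fun k : ℕ => ((k : ℝ) + 1) * q ^ k) = fun k : ℕ => (k : ℝ) ^ 1 * q ^ k + q ^ k := by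
    funext k; ring
  rw [this]; exact h2.add h3

lemma norm_cb_term_le (y : ℝ) (k : ℕ) :
    ‖(Nat.centralBinom k : ℝ) * y ^ k‖ ≤ (4 * |y|) ^ k := by
  rw [norm_mul, norm_pow, Real.norm_eq_abs, Real.norm_eq_abs, mul_pow,
    abs_of_nonneg (by positivity : (0:ℝ) ≤ (Nat.centralBinom k : ℝ))]
  gcongr
  exact cb_le_four_pow' k

lemma summable_cb (y : ℝ) (hy : |y| < 1 / 4) :
    Summable fun k : ℕ => (Nat.centralBinom k : ℝ) * y ^ k := by
  refine Summable.of_norm_bounded (g := fun k => (4 * |y|) ^ k)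
    (summable_geometric_of_lt_one (by positivity) (by linarith)) (norm_cb_term_le y)

lemma summable_k_cb (y : ℝ) (hy : |y| < 1 / 4) :
    Summable fun k : ℕ => (k : ℝ) * (Nat.centralBinom k : ℝ) * y ^ k := by
  refine Summable.of_norm_bounded (aux_summable (4 * |y|) (by positivity) (by linarith)) ?_
  intro k
  rw [mul_assoc, norm_mul, Real.norm_eq_abs, Nat.abs_cast]
  calc (k : ℝ) * ‖(Nat.centralBinom k : ℝ) * y ^ k‖ ≤ ((k:ℝ) + 1) * (4 * |y|) ^ k := by
        have := norm_cb_term_le y k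
        have hk : (0:ℝ) ≤ k := Nat.cast_nonneg k
        nlinarith [norm_nonneg ((Nat.centralBinom k : ℝ) * y ^ k), pow_nonneg (by positivity : (0:ℝ) ≤ 4 * |y|) k]

lemma summable_succ_cb (y : ℝ) (hy : |y| < 1 / 4) :
    Summable fun k : ℕ => ((k : ℝ) + 1) * (Nat.centralBinom (k + 1) : ℝ) * y ^ k := by
  refine Summable.of_norm_bounded (g := fun k => 4 * (((k:ℝ)+1) * (4*|y|)^k)) (((aux_summable (4 * |y|) (by positivity) (by linarith))).mul_left 4) ?_
  intro k
  rw [mul_assoc, norm_mul, Real.norm_eq_abs]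
  have h1 : |(Nat.centralBinom (k+1) : ℝ) * y ^ k| ≤ 4 * (4 * |y|) ^ k := by
    rw [abs_mul, abs_pow, abs_of_nonneg (by positivity : (0:ℝ) ≤ (Nat.centralBinom (k+1) : ℝ)),
      mul_pow]
    calc (Nat.centralBinom (k+1) : ℝ) * |y| ^ k ≤ 4 ^ (k+1) * |y| ^ k := by
          gcongr; exact cb_le_four_pow' (k+1)
    _ = 4 * (4 ^ k * |y| ^ k) := by ring
  have h2 : |(k : ℝ) + 1| = (k:ℝ) + 1 := abs_of_nonneg (by positivity)
  rw [h2]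
  calc ((k:ℝ)+1) * |(Nat.centralBinom (k+1) : ℝ) * y ^ k| ≤ ((k:ℝ)+1) * (4 * (4*|y|)^k) := by
        gcongr
  _ = 4 * (((k:ℝ)+1) * (4*|y|)^k) := by ring

noncomputable def Tcb (y : ℝ) : ℝ :=
  ∑' k : ℕ, ((k : ℝ) + 1) * (Nat.centralBinom (k + 1) : ℝ) * y ^ k

lemma hasDerivAt_Scb (y : ℝ) (hy : |y| < 1 / 4) :
    HasDerivAt Scb (∑' k : ℕ, (k : ℝ) * (Nat.centralBinom k : ℝ) * y ^ (k - 1)) y := by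
  set r : ℝ := (|y| + 1 / 4) / 2 with hr
  have hy0 : 0 ≤ |y| := abs_nonneg y
  have hr0 : 0 ≤ r := by positivity
  have hr4 : r < 1 / 4 := by rw [hr]; linarith
  have hyr : |y| < r := by rw [hr]; linarith
  have hymem : y ∈ Ioo (-r) r := abs_lt.mp hyr
  have hu : Summable fun k : ℕ => (k : ℝ) * 4 ^ k * r ^ (k - 1) := by
    rw [← summable_nat_add_iff 1]
    have := (aux_summable (4 * r) (by positivity) (by linarith)).mul_left 4
    refine this.congr fun k => ?_
    push_cast
    rw [mul_pow]
    ring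
  refine hasDerivAt_tsum_of_isPreconnected hu isOpen_Ioo (convex_Ioo _ _).isPreconnected
    (g := fun k z => (Nat.centralBinom k : ℝ) * z ^ k)
    (g' := fun k z => (k : ℝ) * (Nat.centralBinom k : ℝ) * z ^ (k - 1))
    (fun k z _ => ?_) (fun k z hz => ?_) hymem (summable_cb y hy) hymem
  · simpa [mul_comm, mul_assoc, mul_left_comm] using
      (hasDerivAt_pow k z).const_mul (Nat.centralBinom k : ℝ)
  · have hz' : |z| ≤ r := le_of_lt (abs_lt.mpr hz)
    rw [Real.norm_eq_abs, abs_mul, abs_mul, Nat.abs_cast, abs_pow,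
      abs_of_nonneg (by positivity : (0:ℝ) ≤ (Nat.centralBinom k : ℝ))]
    gcongr
    exact cb_le_four_pow' k

lemma deriv_sum_eq_Tcb (y : ℝ) (hy : |y| < 1 / 4) :
    (∑' k : ℕ, (k : ℝ) * (Nat.centralBinom k : ℝ) * y ^ (k - 1)) = Tcb y := by
  have hs : Summable fun k : ℕ => (k : ℝ) * (Nat.centralBinom k : ℝ) * y ^ (k - 1) := by
    rw [← summable_nat_add_iff 1]
    refine (summable_succ_cb y hy).congr fun k => ?_
    push_cast
    ring
  rw [Summable.tsum_eq_zero_add hs]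
  simp only [Nat.cast_zero, zero_mul, zero_add]
  refine tsum_congr fun k => ?_
  push_cast
  ring

lemma Tcb_ode (y : ℝ) (hy : |y| < 1 / 4) : (1 - 4 * y) * Tcb y = 2 * Scb y := by
  have h1 : y * Tcb y = ∑' k : ℕ, ((k : ℝ) + 1) * (Nat.centralBinom (k + 1) : ℝ) * y ^ (k + 1) := by
    rw [Tcb, ← tsum_mul_left]
    exact tsum_congr fun k => by ring
  have h2 : (∑' k : ℕ, (k : ℝ) * (Nat.centralBinom k : ℝ) * y ^ k) = y * Tcb y := by
    rw [h1, Summable.tsum_eq_zero_add (summable_k_cb y hy)]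
    simp only [Nat.cast_zero, zero_mul, zero_add]
    exact tsum_congr fun k => by push_cast; ring
  have h3 : Tcb y = 4 * (∑' k : ℕ, (k : ℝ) * (Nat.centralBinom k : ℝ) * y ^ k) + 2 * Scb y := by
    rw [Tcb, Scb]
    have hterm : ∀ k : ℕ, ((k : ℝ) + 1) * (Nat.centralBinom (k + 1) : ℝ) * y ^ k =
        4 * ((k : ℝ) * (Nat.centralBinom k : ℝ) * y ^ k) +
          2 * ((Nat.centralBinom k : ℝ) * y ^ k) := by
      intro k
      have h := congrArg (Nat.cast : ℕ → ℝ) (Nat.succ_mul_centralBinom_succ k)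
      push_cast at h
      rw [h]
      ring
    rw [tsum_congr hterm,
      Summable.tsum_add ((summable_k_cb y hy).mul_left 4) ((summable_cb y hy).mul_left 2),
      tsum_mul_left, tsum_mul_left]
  nlinarith [h3, h2]

lemma hasDerivAt_psi (z : ℝ) (hz : |z| < 1 / 4) :
    HasDerivAt (fun w => Scb w * Real.sqrt (1 - 4 * w)) 0 z := by
  have hz' := abs_lt.mp hz
  have hu : 0 < 1 - 4 * z := by linarith
  have h0 : HasDerivAt (fun w : ℝ => 1 - 4 * w) (-4) z := by
    have h := ((hasDerivAt_id' z).const_mul (4:ℝ)).const_sub (1:ℝ); rw [mul_one] at h; exact h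
  have hsqrt : HasDerivAt (fun w => Real.sqrt (1 - 4 * w))
      (-4 / (2 * Real.sqrt (1 - 4 * z))) z := h0.sqrt hu.ne'
  have hS := hasDerivAt_Scb z hz
  rw [deriv_sum_eq_Tcb z hz] at hS
  have hmul := hS.mul hsqrt
  have hsp : 0 < Real.sqrt (1 - 4 * z) := Real.sqrt_pos.mpr hu
  have hs2 : Real.sqrt (1 - 4 * z) ^ 2 = 1 - 4 * z := Real.sq_sqrt hu.le
  have hode := Tcb_ode z hz
  have : Tcb z * Real.sqrt (1 - 4 * z) + Scb z * (-4 / (2 * Real.sqrt (1 - 4 * z))) = 0 := by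
    field_simp
    linear_combination 2 * Tcb z * hs2 + 2 * hode
  rwa [this] at hmul

lemma Scb_mul_sqrt (z : ℝ) (hz : |z| < 1 / 4) : Scb z * Real.sqrt (1 - 4 * z) = 1 := by
  have hderiv : ∀ w ∈ Ioo (-(1/4) : ℝ) (1/4),
      HasDerivAt (fun w => Scb w * Real.sqrt (1 - 4 * w)) 0 w := by
    intro w hw
    exact hasDerivAt_psi w (abs_lt.mpr ⟨by simpa using hw.1, hw.2⟩)
  have hzmem : z ∈ Ioo (-(1/4) : ℝ) (1/4) := by
    have := abs_lt.mp hz; exact ⟨by linarith [this.1], this.2⟩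
  have h0mem : (0 : ℝ) ∈ Ioo (-(1/4) : ℝ) (1/4) := by norm_num
  have hcst := (convex_Ioo (-(1/4) : ℝ) (1/4)).is_const_of_fderivWithin_eq_zero
    (𝕜 := ℝ) (f := fun w => Scb w * Real.sqrt (1 - 4 * w))
    (fun w hw => (hderiv w hw).differentiableAt.differentiableWithinAt)
    (fun w hw => by
      rw [fderivWithin_of_isOpen isOpen_Ioo hw, (hderiv w hw).hasFDerivAt.fderiv]
      exact ContinuousLinearMap.ext fun v => by simp) hzmem h0mem
  have hS0 : Scb 0 = 1 := by
    rw [Scb, tsum_eq_single 0 (fun b hb => by simp [zero_pow hb])]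
    simp [Nat.centralBinom_zero]
  simpa [hS0] using hcst

lemma Scb_eq (z : ℝ) (hz : |z| < 1 / 4) : Scb z = 1 / Real.sqrt (1 - 4 * z) := by
  have hz' := abs_lt.mp hz
  have hu : 0 < 1 - 4 * z := by linarith
  have hsp : Real.sqrt (1 - 4 * z) ≠ 0 := (Real.sqrt_pos.mpr hu).ne'
  field_simp
  exact Scb_mul_sqrt z hz

noncomputable def Acoef (k : ℕ) : ℝ :=
  (Nat.factorial (2 * k - 1) : ℝ) / ((Nat.factorial k : ℝ)) ^ 2

lemma Acoef_key (j : ℕ) :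
    ((j : ℝ) + 1) * Acoef (j + 1) = (Nat.centralBinom (j + 1) : ℝ) / 2 := by
  have h1 : Nat.centralBinom (j+1) * (Nat.factorial (j+1) * Nat.factorial (j+1)) =
      Nat.factorial (2*(j+1)) := by
    rw [Nat.centralBinom]
    have := Nat.choose_mul_factorial_mul_factorial (show j+1 ≤ 2*(j+1) by omega)
    rw [show 2*(j+1)-(j+1) = j+1 by omega] at this
    rw [← mul_assoc]
    exact this
  have h2 : 2*(j+1) * Nat.factorial (2*(j+1)-1) = Nat.factorial (2*(j+1)) :=
    Nat.mul_factorial_pred (by omega)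
  have hc1 := congrArg (Nat.cast : ℕ → ℝ) h1
  have hc2 := congrArg (Nat.cast : ℕ → ℝ) h2
  push_cast at hc1 hc2
  have hf : (Nat.factorial (j+1) : ℝ) ≠ 0 := by
    exact_mod_cast (Nat.factorial_pos (j+1)).ne'
  rw [Acoef]
  field_simp
  linear_combination hc2 - hc1

lemma Acoef_nonneg (k : ℕ) : 0 ≤ Acoef k := by
  rw [Acoef]; positivity

lemma Acoef_le (j : ℕ) : Acoef (j + 1) ≤ (Nat.centralBinom (j + 1) : ℝ) := by
  have h := Acoef_key j
  have h0 := Acoef_nonneg (j + 1)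
  have hj : (1 : ℝ) ≤ (j : ℝ) + 1 := by
    have : (0:ℝ) ≤ (j:ℝ) := Nat.cast_nonneg j
    linarith
  have hc : (0:ℝ) ≤ (Nat.centralBinom (j+1) : ℝ) := by positivity
  nlinarith

lemma summable_g (y : ℝ) (hy : |y| < 1 / 4) :
    Summable fun j : ℕ => Acoef (j + 1) * y ^ (j + 1) := by
  refine Summable.of_norm_bounded (g := fun j => (4 * |y|) * (4 * |y|) ^ j)
    ((summable_geometric_of_lt_one (by positivity) (by linarith)).mul_left _) ?_
  intro j
  rw [norm_mul, norm_pow, Real.norm_eq_abs, Real.norm_eq_abs,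
    abs_of_nonneg (Acoef_nonneg (j+1))]
  calc Acoef (j+1) * |y| ^ (j+1) ≤ (4:ℝ) ^ (j+1) * |y| ^ (j+1) := by
        gcongr
        exact (Acoef_le j).trans (cb_le_four_pow' (j+1))
  _ = 4 * |y| * (4 * |y|) ^ j := by rw [mul_pow]; ring

noncomputable def gfun (y : ℝ) : ℝ := ∑' j : ℕ, Acoef (j + 1) * y ^ (j + 1)

noncomputable def Gfun (y : ℝ) : ℝ := ∑' j : ℕ, (Nat.centralBinom (j + 1) : ℝ) / 2 * y ^ j

lemma hasDerivAt_gfun (y : ℝ) (hy : |y| < 1 / 4) : HasDerivAt gfun (Gfun y) y := by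
  set r : ℝ := (|y| + 1 / 4) / 2 with hr
  have hy0 : 0 ≤ |y| := abs_nonneg y
  have hr0 : 0 ≤ r := by positivity
  have hr4 : r < 1 / 4 := by rw [hr]; linarith
  have hyr : |y| < r := by rw [hr]; linarith
  have hymem : y ∈ Ioo (-r) r := abs_lt.mp hyr
  have hu : Summable fun j : ℕ => (2 : ℝ) * (4 * r) ^ j :=
    (summable_geometric_of_lt_one (by positivity) (by linarith)).mul_left _
  refine hasDerivAt_tsum_of_isPreconnected hu isOpen_Ioo (convex_Ioo _ _).isPreconnected
    (g := fun j z => Acoef (j + 1) * z ^ (j + 1))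
    (g' := fun j z => (Nat.centralBinom (j + 1) : ℝ) / 2 * z ^ j)
    (fun j z _ => ?_) (fun j z hz => ?_) hymem (summable_g y hy) hymem
  · have h := (hasDerivAt_pow (j + 1) z).const_mul (Acoef (j + 1))
    have he : Acoef (j + 1) * ((↑(j + 1) : ℝ) * z ^ (j + 1 - 1)) =
        (Nat.centralBinom (j + 1) : ℝ) / 2 * z ^ j := by
      rw [Nat.add_sub_cancel, ← Acoef_key j]
      push_cast
      ring
    rwa [he] at h
  · have hz' : |z| ≤ r := le_of_lt (abs_lt.mpr hz)
    rw [Real.norm_eq_abs, abs_mul, abs_pow, abs_of_nonneg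
      (by positivity : (0:ℝ) ≤ (Nat.centralBinom (j+1) : ℝ) / 2)]
    calc (Nat.centralBinom (j+1) : ℝ) / 2 * |z| ^ j ≤ (4:ℝ) ^ (j+1) / 2 * r ^ j := by
          gcongr
          exact cb_le_four_pow' (j+1)
    _ = 2 * (4 * r) ^ j := by rw [mul_pow]; ring

lemma Gfun_closed (y : ℝ) (hy : |y| < 1 / 4) :
    Gfun y * (Real.sqrt (1 - 4 * y) * (1 + Real.sqrt (1 - 4 * y))) = 2 := by
  have hy' := abs_lt.mp hy
  have hu : 0 < 1 - 4 * y := by linarith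
  have hsp : 0 < Real.sqrt (1 - 4 * y) := Real.sqrt_pos.mpr hu
  have hs2 : Real.sqrt (1 - 4 * y) ^ 2 = 1 - 4 * y := Real.sq_sqrt hu.le
  by_cases hy0 : y = 0
  · subst hy0
    have hG : Gfun 0 = 1 := by
      rw [Gfun, tsum_eq_single 0 (fun b hb => by simp [zero_pow hb])]
      norm_num [Nat.centralBinom, Nat.choose]
    rw [hG]
    norm_num
  · -- y * Gfun y = (Scb y - 1) / 2
    have hshift : Summable fun j : ℕ => (Nat.centralBinom (j + 1) : ℝ) * y ^ (j + 1) := by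
      have := (summable_nat_add_iff (f := fun k : ℕ => (Nat.centralBinom k : ℝ) * y ^ k) 1).mpr
        (summable_cb y hy)
      exact this
    have h1 : Scb y = 1 + ∑' j : ℕ, (Nat.centralBinom (j + 1) : ℝ) * y ^ (j + 1) := by
      rw [Scb, Summable.tsum_eq_zero_add (summable_cb y hy)]
      simp [Nat.centralBinom_zero]
    have h2 : y * Gfun y = (1 / 2) * ∑' j : ℕ, (Nat.centralBinom (j + 1) : ℝ) * y ^ (j + 1) := by
      rw [Gfun, ← tsum_mul_left, ← tsum_mul_left]
      exact tsum_congr fun j => by ring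
    have hrel : 2 * (y * Gfun y) = Scb y - 1 := by
      rw [h2, h1]; ring
    rw [Scb_eq y hy] at hrel
    have h4y : Real.sqrt (1 - 4 * y) * Real.sqrt (1 - 4 * y) = 1 - 4 * y := by
      nlinarith [hs2]
    -- 2 y G s = 1 - s ; multiply by (1+s): 2 y G s (1+s) = 1 - s^2 = 4y
    have hmul : 2 * y * (Gfun y * (Real.sqrt (1 - 4 * y) * (1 + Real.sqrt (1 - 4 * y)))) =
        2 * y * 2 := by
      have hne := hsp.ne'
      have h' : 2 * (y * Gfun y) * Real.sqrt (1 - 4 * y) = 1 - Real.sqrt (1 - 4 * y) := by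
        rw [hrel, sub_mul, one_div, inv_mul_cancel₀ hne, one_mul]
      linear_combination (1 + Real.sqrt (1 - 4 * y)) * h' - hs2
    have h2y : (2 : ℝ) * y ≠ 0 := by
      simp [hy0]
    exact mul_left_cancel₀ h2y hmul

/-- For `|x| < 1/4`, the series `∑_{k=1}^∞ ((2k-1)!/(k!)²) xᵏ` converges with sum
`log 2 - log(1 + √(1-4x))`.  The sum over `k ≥ 1` is realized by reindexing
`k = j + 1` over all natural numbers `j`. -/
theorem mirror_map_series_KF2 (x : ℝ) (hx : |x| < 1 / 4) :
    HasSum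
      (fun j : ℕ =>
        ((Nat.factorial (2 * (j + 1) - 1) : ℝ) /
            ((Nat.factorial (j + 1) : ℝ)) ^ 2) * x ^ (j + 1))
      (Real.log 2 - Real.log (1 + Real.sqrt (1 - 4 * x))) := by
  have key : ∀ z ∈ Ioo (-(1/4) : ℝ) (1/4),
      HasDerivAt (fun w => gfun w + Real.log (1 + Real.sqrt (1 - 4 * w))) 0 z := by
    intro z hz
    have hz' : |z| < 1 / 4 := abs_lt.mpr ⟨by simpa using hz.1, hz.2⟩
    have hzz := abs_lt.mp hz'
    have hu : 0 < 1 - 4 * z := by linarith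
    have hsp : 0 < Real.sqrt (1 - 4 * z) := Real.sqrt_pos.mpr hu
    have h0 : HasDerivAt (fun w : ℝ => 1 - 4 * w) (-4) z := by
      have h := ((hasDerivAt_id' z).const_mul (4:ℝ)).const_sub (1:ℝ); rw [mul_one] at h; exact h
    have hsqrt : HasDerivAt (fun w => Real.sqrt (1 - 4 * w))
        (-4 / (2 * Real.sqrt (1 - 4 * z))) z := h0.sqrt hu.ne'
    have hin : HasDerivAt (fun w => 1 + Real.sqrt (1 - 4 * w))
        (-4 / (2 * Real.sqrt (1 - 4 * z))) z := by
      exact hsqrt.const_add 1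
    have hlog : HasDerivAt (fun w => Real.log (1 + Real.sqrt (1 - 4 * w)))
        ((-4 / (2 * Real.sqrt (1 - 4 * z))) / (1 + Real.sqrt (1 - 4 * z))) z :=
      hin.log (by positivity)
    have hsum := (hasDerivAt_gfun z hz').add hlog
    have hzero : Gfun z + (-4 / (2 * Real.sqrt (1 - 4 * z))) / (1 + Real.sqrt (1 - 4 * z)) = 0 := by
      have hG := Gfun_closed z hz'
      have h1s : (0:ℝ) < 1 + Real.sqrt (1 - 4 * z) := by positivity
      field_simp
      nlinarith [hG]
    rwa [hzero] at hsum
  have hxmem : x ∈ Ioo (-(1/4) : ℝ) (1/4) := by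
    have := abs_lt.mp hx; exact ⟨by linarith [this.1], this.2⟩
  have h0mem : (0 : ℝ) ∈ Ioo (-(1/4) : ℝ) (1/4) := by norm_num
  have hcst := (convex_Ioo (-(1/4) : ℝ) (1/4)).is_const_of_fderivWithin_eq_zero
    (𝕜 := ℝ) (f := fun w => gfun w + Real.log (1 + Real.sqrt (1 - 4 * w)))
    (fun w hw => (key w hw).differentiableAt.differentiableWithinAt)
    (fun w hw => by
      rw [fderivWithin_of_isOpen isOpen_Ioo hw, (key w hw).hasFDerivAt.fderiv]
      exact ContinuousLinearMap.ext fun v => by simp) hxmem h0mem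
  have hg0 : gfun 0 = 0 := by
    rw [gfun]
    convert tsum_zero with j
    simp
  have hlog0 : Real.log (1 + Real.sqrt (1 - 4 * (0:ℝ))) = Real.log 2 := by norm_num
  have hval : gfun x = Real.log 2 - Real.log (1 + Real.sqrt (1 - 4 * x)) := by
    have := hcst
    simp only [hg0, hlog0] at this
    linarith [this]
  have hsummable := summable_g x hx
  have := hsummable.hasSum
  rw [show (∑' j : ℕ, Acoef (j + 1) * x ^ (j + 1)) = gfun x from rfl, hval] at this
  exact this
end

section
/- Let n ≥ 2 be an integer and let e_1,…,e_{n−1} denote the standard basis of ℤ^{n−1}. Set b_i = (e_i, 1) ∈ ℤ^{n−1} × ℤ for i = 1,…,n−1 and b_n = (−e_1 − ⋯ − e_{n−1}, 1). Suppose t_1,…,t_n ∈ ℚ satisfy 0 ≤ t_i < 1 for all i, t_1 + ⋯ + t_n = 1, and Σ_{i=1}^n t_i·b_i ∈ ℤ^{n−1} × ℤ. Then t_i = 1/n for every i, and Σ_{i=1}^n t_i·b_i = (0, 1). -/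
/-- The unique age-one Box element of `[ℂⁿ/ℤ_n]`: with
`b i = (e i, 1)` for `i = 1, …, n-1` (standard basis vectors `e i` of the
first factor) and `b n = (-e 1 - ⋯ - e (n-1), 1)`, if rational coefficients
`t 1, …, t (n-1)` (here `t`) and `t n` (here `s`) lie in `[0,1)`, sum to `1`,
and the combination `∑ t i • b i + s • b n` is a lattice point, then all the
coefficients equal `1/n` and the combination equals `(0, 1)`. -/
theorem box_of_Cn_mod_Zn (n : ℕ) (hn : 2 ≤ n)
    (t : Fin (n - 1) → ℚ) (s : ℚ)
    (ht0 : ∀ i, 0 ≤ t i) (ht1 : ∀ i, t i < 1) (hs0 : 0 ≤ s) (hs1 : s < 1)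
    (hsum : (∑ i, t i) + s = 1)
    (hint : ∃ (w : Fin (n - 1) → ℤ) (z : ℤ),
      (∑ i, t i • ((Pi.single i 1 : Fin (n - 1) → ℚ), (1 : ℚ)))
          + s • (-(∑ j, (Pi.single j 1 : Fin (n - 1) → ℚ)), (1 : ℚ))
        = (fun j => (w j : ℚ), (z : ℚ))) :
    (∀ i, t i = 1 / (n : ℚ)) ∧ s = 1 / (n : ℚ) ∧
      (∑ i, t i • ((Pi.single i 1 : Fin (n - 1) → ℚ), (1 : ℚ)))
          + s • (-(∑ j, (Pi.single j 1 : Fin (n - 1) → ℚ)), (1 : ℚ))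
        = (0, 1) := by
  obtain ⟨w, z, hw⟩ := hint
  have key : ∀ j, t j - s = (w j : ℚ) := by
    intro j
    have h1 := congrArg (fun p => p.1 j) hw
    simp [Prod.fst_sum, Finset.sum_apply, Pi.single_apply, Finset.mul_sum,
      mul_ite, Finset.sum_ite_eq'] at h1
    linarith
  have hts : ∀ j, t j = s := by
    intro j
    have h := key j
    have h1 : (-1 : ℚ) < (w j : ℚ) := by linarith [ht0 j, hs1]
    have h2 : ((w j : ℚ)) < 1 := by linarith [ht1 j, hs0]
    have h1' : (-1 : ℤ) < w j := by exact_mod_cast h1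
    have h2' : w j < 1 := by exact_mod_cast h2
    have hz : w j = 0 := by omega
    rw [hz] at h
    push_cast at h
    linarith
  have hcard : (∑ i, t i) = ((n - 1 : ℕ) : ℚ) * s := by
    rw [Finset.sum_congr rfl fun i _ => hts i, Finset.sum_const, Finset.card_univ,
      Fintype.card_fin, nsmul_eq_mul]
  have hn1 : ((n - 1 : ℕ) : ℚ) = (n : ℚ) - 1 := by
    have : 1 ≤ n := by omega
    push_cast [Nat.cast_sub this]
    ring
  have hns : (n : ℚ) * s = 1 := by
    rw [hcard, hn1] at hsum; ring_nf at hsum ⊢; linarith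
  have hnq : (0 : ℚ) < (n : ℚ) := by exact_mod_cast by omega
  have hs : s = 1 / (n : ℚ) := by field_simp; linarith
  have hz1 : (z : ℚ) = 1 := by
    have h2 := congrArg (fun p => p.2) hw
    simp [Prod.snd_sum] at h2
    linarith [hsum]
  refine ⟨fun i => by rw [hts i, hs], hs, ?_⟩
  rw [hw]
  refine Prod.ext ?_ (by simpa using hz1)
  funext j
  have := key j
  rw [hts j] at this
  simp only [sub_self] at this
  simpa using this.symm
end

section
/- Let g ≥ 1 be an integer and let N ⊆ ℚ³ be the additive subgroup generated by ℤ³ together with the vector (1/(2g+1))·(1,1,2g−1). Then the set of v = (t_1,t_2,t_3) ∈ N with t_1,t_2,t_3 ∈ ℚ, 0 ≤ t_i < 1 for all i, and t_1 + t_2 + t_3 = 1, is exactly { (k/(2g+1), k/(2g+1), (2g+1−2k)/(2g+1)) : k ∈ ℤ, 1 ≤ k ≤ g }. -/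
/-- Auxiliary subgroup: points of the form `z + m·(1,1,2g-1)/(2g+1)`. -/
def NN (g : ℕ) : AddSubgroup (ℚ × ℚ × ℚ) where
  carrier := { v | ∃ m : ℤ, ∃ z : ℤ × ℤ × ℤ,
      v = ((z.1 : ℚ) + m / (2 * (g : ℚ) + 1),
           (z.2.1 : ℚ) + m / (2 * (g : ℚ) + 1),
           (z.2.2 : ℚ) + m * (2 * (g : ℚ) - 1) / (2 * (g : ℚ) + 1)) }
  zero_mem' := ⟨0, (0, 0, 0), by norm_num [Prod.ext_iff]⟩
  add_mem' := by
    rintro a b ⟨m, z, rfl⟩ ⟨m', z', rfl⟩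
    exact ⟨m + m', (z.1 + z'.1, z.2.1 + z'.2.1, z.2.2 + z'.2.2), by
      simp only [Prod.ext_iff, Prod.mk_add_mk]
      push_cast
      refine ⟨by ring, by ring, by ring⟩⟩
  neg_mem' := by
    rintro a ⟨m, z, rfl⟩
    exact ⟨-m, (-z.1, -z.2.1, -z.2.2), by
      simp only [Prod.ext_iff, Prod.neg_mk]
      push_cast
      refine ⟨by ring, by ring, by ring⟩⟩

/-- The age-one Box elements of `[ℂ³/ℤ_{2g+1}]` (weights `(1,1,2g-1)`): in the
additive subgroup `N ⊆ ℚ³` generated by `ℤ³` together with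
`(1,1,2g-1)/(2g+1)`, the points with all coordinates in `[0,1)` and coordinate
sum `1` are exactly `(k, k, 2g+1-2k)/(2g+1)` for `k = 1, …, g`. -/
theorem box_of_C3_mod_Z2g1 (g : ℕ) (hg : 1 ≤ g) :
    { v : ℚ × ℚ × ℚ |
        v ∈ AddSubgroup.closure
          ({ x : ℚ × ℚ × ℚ |
              ∃ z : ℤ × ℤ × ℤ, x = ((z.1 : ℚ), (z.2.1 : ℚ), (z.2.2 : ℚ)) }
            ∪ {(1 / (2 * (g : ℚ) + 1), 1 / (2 * (g : ℚ) + 1),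
                (2 * (g : ℚ) - 1) / (2 * (g : ℚ) + 1))})
        ∧ 0 ≤ v.1 ∧ v.1 < 1 ∧ 0 ≤ v.2.1 ∧ v.2.1 < 1 ∧ 0 ≤ v.2.2 ∧ v.2.2 < 1
        ∧ v.1 + v.2.1 + v.2.2 = 1 }
    = { v : ℚ × ℚ × ℚ | ∃ k : ℤ, 1 ≤ k ∧ k ≤ (g : ℤ) ∧
        v = ((k : ℚ) / (2 * (g : ℚ) + 1), (k : ℚ) / (2 * (g : ℚ) + 1),
             (2 * (g : ℚ) + 1 - 2 * (k : ℚ)) / (2 * (g : ℚ) + 1)) } := by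
  have hc : (0:ℚ) < 2 * (g : ℚ) + 1 := by positivity
  have hc' : (2 * (g : ℚ) + 1) ≠ 0 := ne_of_gt hc
  -- closure = NN g
  have hclos : AddSubgroup.closure
      ({ x : ℚ × ℚ × ℚ |
          ∃ z : ℤ × ℤ × ℤ, x = ((z.1 : ℚ), (z.2.1 : ℚ), (z.2.2 : ℚ)) }
        ∪ {(1 / (2 * (g : ℚ) + 1), 1 / (2 * (g : ℚ) + 1),
            (2 * (g : ℚ) - 1) / (2 * (g : ℚ) + 1))}) = NN g := by
    apply le_antisymm
    · rw [AddSubgroup.closure_le]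
      rintro x (⟨z, rfl⟩ | hx)
      · exact ⟨0, z, by norm_num⟩
      · rw [Set.mem_singleton_iff] at hx
        subst hx
        exact ⟨1, (0, 0, 0), by norm_num⟩
    · rintro v ⟨m, z, rfl⟩
      have h1 : ((z.1 : ℚ), (z.2.1 : ℚ), (z.2.2 : ℚ)) ∈ AddSubgroup.closure
          ({ x : ℚ × ℚ × ℚ |
              ∃ w : ℤ × ℤ × ℤ, x = ((w.1 : ℚ), (w.2.1 : ℚ), (w.2.2 : ℚ)) }
            ∪ {(1 / (2 * (g : ℚ) + 1), 1 / (2 * (g : ℚ) + 1),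
                (2 * (g : ℚ) - 1) / (2 * (g : ℚ) + 1))}) :=
        AddSubgroup.subset_closure (Or.inl ⟨z, rfl⟩)
      have h2 : ((1 / (2 * (g : ℚ) + 1), 1 / (2 * (g : ℚ) + 1),
            (2 * (g : ℚ) - 1) / (2 * (g : ℚ) + 1)) : ℚ × ℚ × ℚ) ∈ AddSubgroup.closure
          ({ x : ℚ × ℚ × ℚ |
              ∃ w : ℤ × ℤ × ℤ, x = ((w.1 : ℚ), (w.2.1 : ℚ), (w.2.2 : ℚ)) }
            ∪ {(1 / (2 * (g : ℚ) + 1), 1 / (2 * (g : ℚ) + 1),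
                (2 * (g : ℚ) - 1) / (2 * (g : ℚ) + 1))}) :=
        AddSubgroup.subset_closure (Or.inr rfl)
      have hmem := AddSubgroup.add_mem _ h1 (AddSubgroup.zsmul_mem _ h2 m)
      convert hmem using 1
      simp only [Prod.ext_iff, Prod.smul_def, Prod.mk_add_mk, smul_eq_mul, zsmul_eq_mul]
      refine ⟨by ring, by ring, by ring⟩
  ext v
  simp only [Set.mem_setOf_eq, hclos]
  constructor
  · rintro ⟨⟨m, z, rfl⟩, h10, h11, h20, h21, h30, h31, hsum⟩
    simp only at h10 h11 h20 h21 h30 h31 hsum ⊢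
    obtain ⟨q, r, hm, hr0, hr1⟩ :
        ∃ q r : ℤ, m = (2 * (g:ℤ) + 1) * q + r ∧ 0 ≤ r ∧ r < 2 * (g:ℤ) + 1 :=
      ⟨m / (2 * (g:ℤ) + 1), m % (2 * (g:ℤ) + 1), (Int.mul_ediv_add_emod m _).symm,
        Int.emod_nonneg m (by omega), Int.emod_lt_of_pos m (by positivity)⟩
    have hcast : (m : ℚ) = (2 * (g : ℚ) + 1) * q + r := by rw [hm]; push_cast; ring
    have hrQ : (0:ℚ) ≤ (r:ℚ) := by exact_mod_cast hr0
    have hrQ1 : (r:ℚ) < 2 * (g:ℚ) + 1 := by exact_mod_cast hr1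
    have hrq0 : (0:ℚ) ≤ (r:ℚ) / (2 * (g:ℚ) + 1) := by positivity
    have hrq1 : (r:ℚ) / (2 * (g:ℚ) + 1) < 1 := by rw [div_lt_one hc]; linarith
    have key : ∀ a : ℤ, 0 ≤ (a:ℚ) + (r:ℚ)/(2 * (g:ℚ) + 1) →
        (a:ℚ) + (r:ℚ)/(2 * (g:ℚ) + 1) < 1 → a = 0 := by
      intro a ha hb
      have h1 : (-1 : ℚ) < a := by linarith
      have h2 : (a:ℚ) < 1 := by linarith
      have h1' : (-1:ℤ) < a := by exact_mod_cast h1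
      have h2' : a < 1 := by exact_mod_cast h2
      omega
    have e1 : (z.1 : ℚ) + m / (2 * (g:ℚ) + 1)
        = ((z.1 + q : ℤ) : ℚ) + (r:ℚ)/(2 * (g:ℚ) + 1) := by
      push_cast; rw [hcast]; field_simp; ring
    have e2 : (z.2.1 : ℚ) + m / (2 * (g:ℚ) + 1)
        = ((z.2.1 + q : ℤ) : ℚ) + (r:ℚ)/(2 * (g:ℚ) + 1) := by
      push_cast; rw [hcast]; field_simp; ring
    rw [e1] at h10 h11
    rw [e2] at h20 h21
    have hz1 : z.1 + q = 0 := key _ h10 h11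
    have hz2 : z.2.1 + q = 0 := key _ h20 h21
    have ht1 : (z.1 : ℚ) + m / (2 * (g:ℚ) + 1) = (r:ℚ)/(2 * (g:ℚ) + 1) := by
      rw [e1, hz1]; norm_num
    have ht2 : (z.2.1 : ℚ) + m / (2 * (g:ℚ) + 1) = (r:ℚ)/(2 * (g:ℚ) + 1) := by
      rw [e2, hz2]; norm_num
    rw [ht1, ht2] at hsum
    have ht3 : (z.2.2 : ℚ) + m * (2 * (g:ℚ) - 1) / (2 * (g:ℚ) + 1)
        = (2 * (g:ℚ) + 1 - 2 * (r:ℚ)) / (2 * (g:ℚ) + 1) := by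
      have : (2 * (g:ℚ) + 1 - 2 * (r:ℚ)) / (2 * (g:ℚ) + 1)
          = 1 - 2 * ((r:ℚ)/(2 * (g:ℚ) + 1)) := by field_simp
      rw [this]; linarith
    rw [ht3] at h30 h31
    have hrpos : 1 ≤ r := by
      by_contra h
      push_neg at h
      have hr' : r = 0 := by omega
      rw [hr'] at h31
      norm_num [div_lt_one hc] at h31
    have hrle : r ≤ (g : ℤ) := by
      rw [le_div_iff₀ hc] at h30
      have : 2 * (r:ℚ) ≤ 2 * (g:ℚ) + 1 := by linarith
      have h2 : 2 * r ≤ 2 * (g:ℤ) + 1 := by exact_mod_cast this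
      omega
    exact ⟨r, hrpos, hrle, by rw [Prod.ext_iff, Prod.ext_iff]; exact ⟨ht1, ht2, ht3⟩⟩
  · rintro ⟨k, hk1, hk2, rfl⟩
    have hkc1 : (1:ℚ) ≤ (k:ℚ) := by exact_mod_cast hk1
    have hkc2 : (k:ℚ) ≤ (g:ℚ) := by exact_mod_cast hk2
    refine ⟨⟨k, (0, 0, 1 - k), ?_⟩, ?_, ?_, ?_, ?_, ?_, ?_, ?_⟩
    · simp only [Prod.ext_iff]
      push_cast
      refine ⟨by ring, by ring, ?_⟩
      field_simp
      ring
    · positivity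
    · simp only; rw [div_lt_one hc]; linarith
    · positivity
    · simp only; rw [div_lt_one hc]; linarith
    · simp only; apply div_nonneg _ hc.le; linarith
    · simp only; rw [div_lt_one hc]; linarith
    · simp only; field_simp; ring
end
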